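/- arXiv:2003.07103 — 6 statements merged into one kernel-verified Lean document; each statement's English description precedes it below -/
import Mathlib

section
/- Let Q0(z,u), Q1(z,u), Q2(z,u) be polynomials with non-negative real coefficients and let M(z,u) be the formal power series solution of the linear catalytic equation. Then there exists a unique formal power series u(z) ∈ ℝ[[z]] with u(0)=0 satisfying u(z) = z·Q2(z,u(z)) + z·u(z)·Q1(z,u(z)), and the series M(z,0) satisfies M(z,0)·(1 − z·Q1(z,u(z))) = Q0(z,u(z)) in ℝ[[z]]; equivalently M(z,0) = Q0(z,u(z))/(1 − z·Q1(z,u(z))). -/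
noncomputable section

/-- Coefficientwise division by `u` after removing the constant coefficient:
`divU g = (g - g(0))/u` for `g ∈ ℝ[[u]]`. -/
def divU (g : PowerSeries ℝ) : PowerSeries ℝ :=
  PowerSeries.mk fun n => PowerSeries.coeff (R := ℝ) (n + 1) g

/-- The divided difference `(M(z,u) - M(z,0))/u`, applied coefficientwise in `z`,
for `M ∈ ℝ[[u]][[z]]` (outer variable `z`, inner variable `u`). -/
def divDiff (M : PowerSeries (PowerSeries ℝ)) : PowerSeries (PowerSeries ℝ) :=
  PowerSeries.mk fun n => divU (PowerSeries.coeff (R := PowerSeries ℝ) n M)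

/-- Embedding of a bivariate polynomial `Q(z,u)` (outer polynomial variable `z`,
inner polynomial variable `u`) into `ℝ[[u]][[z]]`. -/
def embQ (Q : Polynomial (Polynomial ℝ)) : PowerSeries (PowerSeries ℝ) :=
  Polynomial.eval₂
    ((PowerSeries.C (R := PowerSeries ℝ)).comp
      (Polynomial.eval₂RingHom (PowerSeries.C (R := ℝ)) PowerSeries.X))
    PowerSeries.X Q

/-- Evaluation `Q(z, w(z))` of a bivariate polynomial `Q(z,u)` at `u = w(z) ∈ ℝ[[z]]`. -/
def evalZU (Q : Polynomial (Polynomial ℝ)) (w : PowerSeries ℝ) : PowerSeries ℝ :=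
  Polynomial.eval₂ (Polynomial.eval₂RingHom (PowerSeries.C (R := ℝ)) w) PowerSeries.X Q

/-- `M(z,0)`: set the catalytic variable `u` to zero. -/
def atU0 (M : PowerSeries (PowerSeries ℝ)) : PowerSeries ℝ :=
  PowerSeries.map (PowerSeries.constantCoeff (R := ℝ)) M

namespace KMaux

open PowerSeries

variable {R S : Type} [CommRing R] [CommRing S]

/-- Substitution function: coefficients via `φ`, variable goes to `w` (zero constant term). -/
def substFun (φ : R →+* PowerSeries S) (w : PowerSeries S) (g : PowerSeries R) :
    PowerSeries S :=
  PowerSeries.mk fun n => coeff (R := S) n (Polynomial.eval₂ φ w (trunc (n + 1) g))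

lemma X_pow_dvd_eval₂ (φ : R →+* PowerSeries S) {w : PowerSeries S}
    (hw : constantCoeff (R := S) w = 0) {m : ℕ} {p : Polynomial R}
    (hp : ∀ k < m, p.coeff k = 0) :
    (X : PowerSeries S) ^ m ∣ Polynomial.eval₂ φ w p := by
  obtain ⟨q, hq⟩ := Polynomial.X_pow_dvd_iff.mpr hp
  rw [hq, Polynomial.eval₂_mul, Polynomial.eval₂_X_pow]
  exact dvd_mul_of_dvd_left (pow_dvd_pow_of_dvd (X_dvd_iff.mpr hw) m) _

lemma coeff_substFun (φ : R →+* PowerSeries S) {w : PowerSeries S}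
    (hw : constantCoeff (R := S) w = 0) (g : PowerSeries R) {n N : ℕ} (h : n < N) :
    coeff (R := S) n (substFun φ w g) = coeff (R := S) n (Polynomial.eval₂ φ w (trunc N g)) := by
  have key : coeff (R := S) n
      (Polynomial.eval₂ φ w (trunc N g) - Polynomial.eval₂ φ w (trunc (n + 1) g)) = 0 := by
    rw [← Polynomial.eval₂_sub]
    refine X_pow_dvd_iff.mp (X_pow_dvd_eval₂ φ hw ?_) n (Nat.lt_succ_self n)
    intro k hk
    have hk' : k < N := lt_of_lt_of_le hk h
    simp [Polynomial.coeff_sub, coeff_trunc, hk, hk']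
  rw [map_sub] at key
  rw [substFun, coeff_mk, eq_comm, ← sub_eq_zero]
  exact key

/-- Bundled substitution ring hom. -/
def substHom (φ : R →+* PowerSeries S) (w : PowerSeries S) (hw : constantCoeff (R := S) w = 0) :
    PowerSeries R →+* PowerSeries S where
  toFun := substFun φ w
  map_one' := by
    ext n
    simp [substFun, coeff_mk, trunc_one, Polynomial.eval₂_one]
  map_mul' g h := by
    ext n
    have hg : ∀ i : ℕ, i ≤ n → coeff (R := S) i (substFun φ w g)
        = coeff (R := S) i (Polynomial.eval₂ φ w (trunc (n + 1) g)) := fun i hi =>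
      coeff_substFun φ hw g (Nat.lt_succ_of_le hi)
    have hh : ∀ i : ℕ, i ≤ n → coeff (R := S) i (substFun φ w h)
        = coeff (R := S) i (Polynomial.eval₂ φ w (trunc (n + 1) h)) := fun i hi =>
      coeff_substFun φ hw h (Nat.lt_succ_of_le hi)
    have main : coeff (R := S) n (substFun φ w (g * h))
        = coeff (R := S) n (Polynomial.eval₂ φ w (trunc (n + 1) g * trunc (n + 1) h)) := by
      rw [show coeff (R := S) n (substFun φ w (g * h))
          = coeff (R := S) n (Polynomial.eval₂ φ w (trunc (n + 1) (g * h))) from by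
        rw [substFun, coeff_mk]]
      have key : coeff (R := S) n (Polynomial.eval₂ φ w
          (trunc (n + 1) g * trunc (n + 1) h - trunc (n + 1) (g * h))) = 0 := by
        refine X_pow_dvd_iff.mp (X_pow_dvd_eval₂ φ hw ?_) n (Nat.lt_succ_self n)
        intro k hk
        rw [Polynomial.coeff_sub, Polynomial.coeff_mul, coeff_trunc, if_pos hk,
          PowerSeries.coeff_mul, sub_eq_zero]
        refine Finset.sum_congr rfl fun p hp => ?_
        rw [Finset.HasAntidiagonal.mem_antidiagonal] at hp
        rw [coeff_trunc, coeff_trunc, if_pos, if_pos] <;> omega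
      rw [Polynomial.eval₂_sub, map_sub] at key
      rw [eq_comm, ← sub_eq_zero]
      exact key
    rw [main, Polynomial.eval₂_mul, PowerSeries.coeff_mul, PowerSeries.coeff_mul]
    refine Finset.sum_congr rfl fun p hp => ?_
    rw [Finset.HasAntidiagonal.mem_antidiagonal] at hp
    rw [hg p.1 (by omega), hh p.2 (by omega)]
  map_zero' := by
    ext n
    simp [substFun, coeff_mk, Polynomial.eval₂_zero]
  map_add' g h := by
    ext n
    simp [substFun, coeff_mk, map_add, Polynomial.eval₂_add]

lemma substHom_apply (φ : R →+* PowerSeries S) (w : PowerSeries S)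
    (hw : constantCoeff (R := S) w = 0) (g : PowerSeries R) :
    substHom φ w hw g = substFun φ w g := rfl

lemma substHom_C (φ : R →+* PowerSeries S) (w : PowerSeries S)
    (hw : constantCoeff (R := S) w = 0) (r : R) :
    substHom φ w hw (C (R := R) r) = φ r := by
  ext n
  rw [substHom_apply, substFun, coeff_mk, trunc_C, Polynomial.eval₂_C]

lemma substHom_X (φ : R →+* PowerSeries S) (w : PowerSeries S)
    (hw : constantCoeff (R := S) w = 0) :
    substHom φ w hw X = w := by
  ext n
  rw [substHom_apply, substFun, coeff_mk]
  cases n with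
  | zero =>
    have h1 : trunc 1 (X : PowerSeries R) = 0 := by
      apply Polynomial.ext
      intro k
      rw [coeff_trunc]
      split
      · next hk =>
        interval_cases k
        simp [coeff_X]
      · simp
    rw [h1, Polynomial.eval₂_zero]
    simp [coeff_zero_eq_constantCoeff, hw]
  | succ m =>
    rw [trunc_X, Polynomial.eval₂_X]

lemma substHom_map_C (f : PowerSeries S) :
    substHom (RingHom.id (PowerSeries S)) X (by simp)
      (PowerSeries.map (C (R := S)) f) = f := by
  ext n
  rw [substHom_apply, substFun, coeff_mk]
  have hdeg := natDegree_trunc_lt (PowerSeries.map (C (R := S)) f) n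
  rw [Polynomial.eval₂_eq_sum_range' _ hdeg X, map_sum]
  have hterm : ∀ i ∈ Finset.range (n + 1),
      coeff (R := S) n ((RingHom.id (PowerSeries S))
        ((trunc (n + 1) (PowerSeries.map (C (R := S)) f)).coeff i) * X ^ i)
      = if n = i then coeff (R := S) i f else 0 := by
    intro i hi
    rw [Finset.mem_range] at hi
    rw [RingHom.id_apply, coeff_trunc, if_pos hi, PowerSeries.coeff_map,
      coeff_C_mul_X_pow]
  rw [Finset.sum_congr rfl hterm, Finset.sum_ite_eq]
  simp

lemma map_map' {T : Type} [CommRing T] (f : R →+* S) (g : S →+* T) (φ : PowerSeries R) :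
    PowerSeries.map g (PowerSeries.map f φ) = PowerSeries.map (g.comp f) φ := by
  ext n
  simp [PowerSeries.coeff_map]

/-- Inner substitution `u ↦ w` on `ℝ[[u]]`. -/
def sigmaW (w : PowerSeries ℝ) (hw : constantCoeff (R := ℝ) w = 0) :
    PowerSeries ℝ →+* PowerSeries ℝ :=
  substHom (C (R := ℝ)) w hw

lemma sigmaW_X (w : PowerSeries ℝ) (hw : constantCoeff (R := ℝ) w = 0) :
    sigmaW w hw X = w := substHom_X _ _ _

lemma sigmaW_C (w : PowerSeries ℝ) (hw : constantCoeff (R := ℝ) w = 0) (r : ℝ) :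
    sigmaW w hw (C (R := ℝ) r) = C (R := ℝ) r := substHom_C _ _ _ _

/-- The full substitution `(z,u) ↦ (z, w(z))` on `ℝ[[u]][[z]]`. -/
def Phi (w : PowerSeries ℝ) (hw : constantCoeff (R := ℝ) w = 0) :
    PowerSeries (PowerSeries ℝ) →+* PowerSeries ℝ :=
  (substHom (RingHom.id (PowerSeries ℝ)) X (by simp)).comp
    (PowerSeries.map (sigmaW w hw))

lemma Phi_X (w : PowerSeries ℝ) (hw : constantCoeff (R := ℝ) w = 0) :
    Phi w hw X = X := by
  rw [Phi, RingHom.comp_apply, PowerSeries.map_X, substHom_X]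

lemma Phi_C (w : PowerSeries ℝ) (hw : constantCoeff (R := ℝ) w = 0) (g : PowerSeries ℝ) :
    Phi w hw (C (R := PowerSeries ℝ) g) = sigmaW w hw g := by
  rw [Phi, RingHom.comp_apply, PowerSeries.map_C, substHom_C, RingHom.id_apply]

lemma Phi_map_C (w : PowerSeries ℝ) (hw : constantCoeff (R := ℝ) w = 0) (f : PowerSeries ℝ) :
    Phi w hw (PowerSeries.map (C (R := ℝ)) f) = f := by
  rw [Phi, RingHom.comp_apply, map_map',
    show (sigmaW w hw).comp (C (R := ℝ)) = C (R := ℝ) from RingHom.ext (sigmaW_C w hw)]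
  exact substHom_map_C f

lemma Phi_embQ (w : PowerSeries ℝ) (hw : constantCoeff (R := ℝ) w = 0)
    (Q : Polynomial (Polynomial ℝ)) :
    Phi w hw (embQ Q) = evalZU Q w := by
  unfold embQ evalZU
  rw [Polynomial.hom_eval₂, Phi_X]
  congr 1
  refine RingHom.ext fun p => ?_
  simp only [RingHom.comp_apply, Polynomial.coe_eval₂RingHom]
  rw [Phi_C, Polynomial.hom_eval₂, sigmaW_X]
  congr 1
  exact RingHom.ext (sigmaW_C w hw)

lemma atU0_embQ (Q : Polynomial (Polynomial ℝ)) :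
    PowerSeries.map (constantCoeff (R := ℝ)) (embQ Q) = evalZU Q 0 := by
  unfold embQ evalZU
  rw [Polynomial.hom_eval₂, PowerSeries.map_X]
  congr 1
  refine RingHom.ext fun p => ?_
  simp only [RingHom.comp_apply, Polynomial.coe_eval₂RingHom]
  rw [PowerSeries.map_C, Polynomial.hom_eval₂, PowerSeries.constantCoeff_X,
    show (constantCoeff (R := ℝ)).comp (C (R := ℝ)) = RingHom.id ℝ from RingHom.ext (by simp)]
  rw [Polynomial.hom_eval₂]
  simp

lemma X_mul_divU (g : PowerSeries ℝ) :
    X * divU g = g - C (R := ℝ) (constantCoeff (R := ℝ) g) := by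
  ext k
  cases k with
  | zero =>
    simp [coeff_zero_eq_constantCoeff, map_sub, constantCoeff_C, map_mul,
      constantCoeff_X]
  | succ m =>
    rw [coeff_succ_X_mul, divU, coeff_mk, map_sub, coeff_C, if_neg (Nat.succ_ne_zero m)]
    ring

lemma cu_divDiff (M : PowerSeries (PowerSeries ℝ)) :
    C (R := PowerSeries ℝ) X * divDiff M = M - PowerSeries.map (C (R := ℝ)) (atU0 M) := by
  refine PowerSeries.ext fun n => ?_
  rw [coeff_C_mul, divDiff, coeff_mk, X_mul_divU, map_sub, PowerSeries.coeff_map]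
  congr 2

lemma evalZU_sub_dvd (Q : Polynomial (Polynomial ℝ)) (a b : PowerSeries ℝ) (n : ℕ)
    (hd : (X : PowerSeries ℝ) ^ n ∣ a - b) :
    (X : PowerSeries ℝ) ^ n ∣ evalZU Q a - evalZU Q b := by
  unfold evalZU
  induction Q using Polynomial.induction_on' with
  | add p q hp hq =>
    rw [Polynomial.eval₂_add, Polynomial.eval₂_add]
    have := dvd_add hp hq
    convert this using 1
    ring
  | monomial i p =>
    rw [Polynomial.eval₂_monomial, Polynomial.eval₂_monomial, ← sub_mul]
    apply dvd_mul_of_dvd_left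
    simp only [Polynomial.coe_eval₂RingHom]
    induction p using Polynomial.induction_on' with
    | add p q hp hq =>
      rw [Polynomial.eval₂_add, Polynomial.eval₂_add]
      have := dvd_add hp hq
      convert this using 1
      ring
    | monomial j r =>
      rw [Polynomial.eval₂_monomial, Polynomial.eval₂_monomial, ← mul_sub]
      exact dvd_mul_of_dvd_right (dvd_trans hd (sub_dvd_pow_sub_pow a b j)) _

/-- Existence and uniqueness of the kernel root. -/
lemma kernel_exists_unique (Q1 Q2 : Polynomial (Polynomial ℝ)) :
    ∃! u : PowerSeries ℝ, constantCoeff (R := ℝ) u = 0 ∧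
      u = X * evalZU Q2 u + X * u * evalZU Q1 u := by
  set G : PowerSeries ℝ → PowerSeries ℝ :=
    fun a => X * evalZU Q2 a + X * a * evalZU Q1 a with hG
  have hGc : ∀ (n : ℕ) (a b : PowerSeries ℝ), (X : PowerSeries ℝ) ^ n ∣ a - b →
      (X : PowerSeries ℝ) ^ (n + 1) ∣ G a - G b := by
    intro n a b hd
    have h2 := evalZU_sub_dvd Q2 a b n hd
    have h1 := evalZU_sub_dvd Q1 a b n hd
    have hrw : G a - G b = X * ((evalZU Q2 a - evalZU Q2 b)
        + ((a - b) * evalZU Q1 a + b * (evalZU Q1 a - evalZU Q1 b))) := by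
      simp only [hG]; ring
    have hdt : (X : PowerSeries ℝ) * X ^ n ∣ X * ((evalZU Q2 a - evalZU Q2 b)
        + ((a - b) * evalZU Q1 a + b * (evalZU Q1 a - evalZU Q1 b))) :=
      mul_dvd_mul (dvd_refl X)
        (dvd_add h2 (dvd_add (hd.mul_right _) (h1.mul_left b)))
    calc (X : PowerSeries ℝ) ^ (n + 1) = X * X ^ n := by ring
      _ ∣ G a - G b := by rw [hrw]; exact hdt
  -- iterates
  set a : ℕ → PowerSeries ℝ := fun k => G^[k] 0 with ha
  have hstep : ∀ k, (X : PowerSeries ℝ) ^ k ∣ a (k + 1) - a k := by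
    intro k
    induction k with
    | zero => simp
    | succ k ih =>
      have hiter : a (k + 2) - a (k + 1) = G (a (k + 1)) - G (a k) := by
        simp only [ha, Function.iterate_succ_apply']
      rw [hiter]
      exact hGc k _ _ ih
  have hmono : ∀ k l, k ≤ l → (X : PowerSeries ℝ) ^ k ∣ a l - a k := by
    intro k l hkl
    induction l, hkl using Nat.le_induction with
    | base => simp
    | succ l hkl ih =>
      have hsplit : a (l + 1) - a k = (a (l + 1) - a l) + (a l - a k) := by ring
      rw [hsplit]
      exact dvd_add (dvd_trans (pow_dvd_pow X hkl) (hstep l)) ih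
  set w : PowerSeries ℝ := PowerSeries.mk (fun n => coeff (R := ℝ) n (a (n + 1))) with hwdef
  have hcoeff : ∀ (n N : ℕ), n < N → coeff (R := ℝ) n w = coeff (R := ℝ) n (a N) := by
    intro n N hnN
    have hd := hmono (n + 1) N hnN
    have hz := X_pow_dvd_iff.mp hd n (Nat.lt_succ_self n)
    rw [map_sub] at hz
    rw [hwdef, coeff_mk]
    linarith
  have hdvdw : ∀ N, (X : PowerSeries ℝ) ^ N ∣ w - a N := by
    intro N
    rw [X_pow_dvd_iff]
    intro k hk
    rw [map_sub, hcoeff k N hk, sub_self]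
  have hGw : G w = w := by
    refine PowerSeries.ext fun n => ?_
    have h1 := hGc (n + 1) w (a (n + 1)) (hdvdw (n + 1))
    have hiter : G (a (n + 1)) = a (n + 2) := by
      simp only [ha, Function.iterate_succ_apply']
    rw [hiter] at h1
    have h2 := X_pow_dvd_iff.mp h1 n (by omega)
    rw [map_sub] at h2
    rw [hcoeff n (n + 2) (by omega)]
    linarith
  have hw0 : constantCoeff (R := ℝ) w = 0 := by
    conv_lhs => rw [← hGw]
    simp only [hG]
    simp [map_add, map_mul, constantCoeff_X]
  have huniq : ∀ b : PowerSeries ℝ, b = G b → b = w := by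
    intro b hb
    have key : ∀ n, (X : PowerSeries ℝ) ^ n ∣ b - w := by
      intro n
      induction n with
      | zero => simp
      | succ n ih =>
        have := hGc n b w ih
        rwa [← hb, hGw] at this
    refine PowerSeries.ext fun n => ?_
    have hz := X_pow_dvd_iff.mp (key (n + 1)) n (Nat.lt_succ_self n)
    rw [map_sub] at hz
    linarith
  refine ⟨w, ⟨hw0, hGw.symm⟩, fun y hy => ?_⟩
  exact huniq y hy.2

lemma kernel_identity (Q0 Q1 Q2 : Polynomial (Polynomial ℝ))
    (M : PowerSeries (PowerSeries ℝ))
    (hM : M = embQ Q0 + X * M * embQ Q1 + X * divDiff M * embQ Q2)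
    (v : PowerSeries ℝ) (hv0 : constantCoeff (R := ℝ) v = 0)
    (hveq : v = X * evalZU Q2 v + X * v * evalZU Q1 v) :
    atU0 M * (1 - X * evalZU Q1 v) = evalZU Q0 v := by
  by_cases hv : v = 0
  · subst hv
    have hq2 : evalZU Q2 0 = 0 := by
      have h0 : (X : PowerSeries ℝ) * evalZU Q2 0 = 0 := by
        have := hveq.symm
        rw [mul_zero, zero_mul, add_zero] at this
        exact this
      rcases mul_eq_zero.mp h0 with h | h
      · exact absurd h X_ne_zero
      · exact h
    have h : atU0 M = evalZU Q0 0 + X * atU0 M * evalZU Q1 0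
        + X * atU0 (divDiff M) * evalZU Q2 0 := by
      conv_lhs => rw [hM]
      unfold atU0
      rw [map_add, map_add, map_mul, map_mul, map_mul, map_mul, PowerSeries.map_X,
        atU0_embQ, atU0_embQ, atU0_embQ]
    rw [hq2] at h
    linear_combination h
  · set Φ := Phi v hv0 with hΦ
    have e1 : Φ M = evalZU Q0 v + X * Φ M * evalZU Q1 v
        + X * Φ (divDiff M) * evalZU Q2 v := by
      conv_lhs => rw [hM]
      rw [map_add, map_add, map_mul, map_mul, map_mul, map_mul, Phi_X,
        Phi_embQ, Phi_embQ, Phi_embQ]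
    have e2 : v * Φ (divDiff M) = Φ M - atU0 M := by
      have h := congrArg Φ (cu_divDiff M)
      rw [map_mul, map_sub, Phi_C, sigmaW_X, Phi_map_C] at h
      exact h
    have key : v * evalZU Q0 v = v * ((1 - X * evalZU Q1 v) * atU0 M) := by
      linear_combination (-v) * e1 - (X * evalZU Q2 v) * e2 + (Φ M - atU0 M) * hveq
    have hc := mul_left_cancel₀ hv key
    linear_combination -hc

end KMaux

/-- **Proposition 1** (kernel method).  If `M(z,u)` is the power series solution of the
linear catalytic equation
`M(z,u) = Q0(z,u) + z M(z,u) Q1(z,u) + z ((M(z,u) - M(z,0))/u) Q2(z,u)`, where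
`Q0, Q1, Q2` are polynomials with non-negative coefficients, then there is a unique
power series `u(z)` with `u(0) = 0` and `u(z) = z Q2(z,u(z)) + z u(z) Q1(z,u(z))`, and
`M(z,0) (1 - z Q1(z,u(z))) = Q0(z,u(z))`, i.e. `M(z,0) = Q0(z,u(z))/(1 - z Q1(z,u(z)))`. -/
theorem linear_catalytic_kernel_method
    (Q0 Q1 Q2 : Polynomial (Polynomial ℝ))
    (hQ0 : ∀ i j, 0 ≤ (Q0.coeff i).coeff j)
    (hQ1 : ∀ i j, 0 ≤ (Q1.coeff i).coeff j)
    (hQ2 : ∀ i j, 0 ≤ (Q2.coeff i).coeff j)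
    (M : PowerSeries (PowerSeries ℝ))
    (hM : M = embQ Q0 + PowerSeries.X * M * embQ Q1 +
      PowerSeries.X * divDiff M * embQ Q2) :
    (∃! u : PowerSeries ℝ, PowerSeries.constantCoeff (R := ℝ) u = 0 ∧
      u = PowerSeries.X * evalZU Q2 u + PowerSeries.X * u * evalZU Q1 u) ∧
    (∀ u : PowerSeries ℝ, PowerSeries.constantCoeff (R := ℝ) u = 0 →
      u = PowerSeries.X * evalZU Q2 u + PowerSeries.X * u * evalZU Q1 u →
      atU0 M * (1 - PowerSeries.X * evalZU Q1 u) = evalZU Q0 u) :=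
  ⟨KMaux.kernel_exists_unique Q1 Q2,
    fun u hu0 hueq => KMaux.kernel_identity Q0 Q1 Q2 M hM u hu0 hueq⟩
end
end

section
/- Let P(x0,x1,z,u) be real-analytic near p = (f0, y0, z0, u0) ∈ ℝ⁴ with P_{x1}(p) ≠ 0 and P_{x0x0}(p) ≠ 0, and suppose f̄(z,u) and ȳ(z,u) are analytic near (z0,u0) with f̄(z0,u0) = f0, ȳ(z0,u0) = y0, satisfying P(f̄(z,u), ȳ(z,u), z, u) = 0 and P_{x0}(f̄(z,u), ȳ(z,u), z, u) = 0 identically near (z0,u0). Define P̄(z,u) = P_u(f̄(z,u), ȳ(z,u), z, u) and let Δ be the determinant of the 3×3 matrix with rows (P_{x0}, P_{x1}, P_z), (P_{x0x0}, P_{x0x1}, P_{x0z}), (P_{x0u}, P_{x1u}, P_{uz}), all entries evaluated at p. Then ∂P̄/∂z(z0,u0) = −Δ/(P_{x1}(p)·P_{x0x0}(p)); in particular ∂P̄/∂z(z0,u0) ≠ 0 if and only if Δ ≠ 0. -/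
noncomputable section

open Filter Topology

private abbrev E4 : Type := ℝ × ℝ × ℝ × ℝ

private lemma pd_eq_aux (Q : E4 → ℝ) {q : E4} (hq : DifferentiableAt ℝ Q q)
    {L : ℝ → E4} {t0 : ℝ} {v : E4} (hL : HasDerivAt L v t0) (hLq : L t0 = q) :
    deriv (fun t => Q (L t)) t0 = fderiv ℝ Q q v := by
  subst hLq
  exact (hq.hasFDerivAt.comp_hasDerivAt t0 hL).deriv

private lemma second_pd_aux (Q : E4 → ℝ) {p : E4} (hQ : AnalyticAt ℝ Q p)
    {γ : ℝ → E4} {t0 : ℝ} {v : E4} (w : E4)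
    (hγ : HasDerivAt γ v t0) (hγp : γ t0 = p)
    (g : ℝ → ℝ)
    (hg : ∀ t, DifferentiableAt ℝ Q (γ t) → g t = fderiv ℝ Q (γ t) w) :
    deriv g t0 = fderiv ℝ (fderiv ℝ Q) p v w := by
  subst hγp
  have hev : ∀ᶠ t in 𝓝 t0, AnalyticAt ℝ Q (γ t) :=
    hγ.continuousAt hQ.eventually_analyticAt
  have heq' : g =ᶠ[𝓝 t0] fun t => fderiv ℝ Q (γ t) w :=
    hev.mono fun t ht => hg t ht.differentiableAt
  rw [heq'.deriv_eq]
  have hFd : DifferentiableAt ℝ (fderiv ℝ Q) (γ t0) := (hQ.fderiv).differentiableAt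
  have h1 : HasDerivAt (fun t => fderiv ℝ Q (γ t)) (fderiv ℝ (fderiv ℝ Q) (γ t0) v) t0 :=
    hFd.hasFDerivAt.comp_hasDerivAt t0 hγ
  have h2 : HasDerivAt (fun t => fderiv ℝ Q (γ t) w)
      (fderiv ℝ (fderiv ℝ Q) (γ t0) v w + fderiv ℝ Q (γ t0) 0) t0 :=
    h1.clm_apply (hasDerivAt_const t0 w)
  simpa using h2.deriv

-- line curves
private lemma l0_aux (y z u x : ℝ) :
    HasDerivAt (fun s => ((s, y, z, u) : E4)) (1, 0, 0, 0) x :=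
  (hasDerivAt_id x).prodMk (hasDerivAt_const x _)

private lemma l1_aux (x z u y : ℝ) :
    HasDerivAt (fun r => ((x, r, z, u) : E4)) (0, 1, 0, 0) y :=
  (hasDerivAt_const y x).prodMk ((hasDerivAt_id y).prodMk (hasDerivAt_const y _))

private lemma l2_aux (x y u z : ℝ) :
    HasDerivAt (fun t => ((x, y, t, u) : E4)) (0, 0, 1, 0) z :=
  (hasDerivAt_const z x).prodMk ((hasDerivAt_const z y).prodMk
    ((hasDerivAt_id z).prodMk (hasDerivAt_const z u)))

private lemma l3_aux (x y z u : ℝ) :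
    HasDerivAt (fun v => ((x, y, z, v) : E4)) (0, 0, 0, 1) u :=
  (hasDerivAt_const u x).prodMk ((hasDerivAt_const u y).prodMk
    ((hasDerivAt_const u z).prodMk (hasDerivAt_id u)))


/-- The key determinant computation: if `P(f̄,ȳ,z,u) = 0` and `P_{x0}(f̄,ȳ,z,u) = 0`
identically near `(z0,u0)` and `P̄(z,u) = P_u(f̄(z,u),ȳ(z,u),z,u)`, then
`P̄_z(z0,u0) = -Δ/(P_{x1}·P_{x0x0})` where `Δ` is the determinant of the matrix with
rows `(P_{x0}, P_{x1}, P_z)`, `(P_{x0x0}, P_{x0x1}, P_{x0z})`,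
`(P_{x0u}, P_{x1u}, P_{uz})` at `p`; in particular `P̄_z(z0,u0) ≠ 0 ↔ Δ ≠ 0`. -/
theorem reduced_equation_z_derivative
    (P : ℝ → ℝ → ℝ → ℝ → ℝ) (fb yb : ℝ → ℝ → ℝ) (z0 u0 : ℝ)
    (hPa : AnalyticAt ℝ
      (fun q : ℝ × ℝ × ℝ × ℝ => P q.1 q.2.1 q.2.2.1 q.2.2.2)
      (fb z0 u0, yb z0 u0, z0, u0))
    (hfa : AnalyticAt ℝ (fun q : ℝ × ℝ => fb q.1 q.2) (z0, u0))
    (hya : AnalyticAt ℝ (fun q : ℝ × ℝ => yb q.1 q.2) (z0, u0))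
    (hPx1 : deriv (fun r => P (fb z0 u0) r z0 u0) (yb z0 u0) ≠ 0)
    (hPx0x0 : deriv (fun s => deriv (fun t => P t (yb z0 u0) z0 u0) s)
      (fb z0 u0) ≠ 0)
    (heq : ∃ δ : ℝ, 0 < δ ∧ ∀ z u : ℝ, |z - z0| < δ → |u - u0| < δ →
      P (fb z u) (yb z u) z u = 0 ∧
      deriv (fun s => P s (yb z u) z u) (fb z u) = 0)
    (Δ : ℝ)
    (hΔ : Δ = Matrix.det
      !![deriv (fun s => P s (yb z0 u0) z0 u0) (fb z0 u0),
          deriv (fun r => P (fb z0 u0) r z0 u0) (yb z0 u0),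
          deriv (fun t => P (fb z0 u0) (yb z0 u0) t u0) z0;
        deriv (fun s => deriv (fun t => P t (yb z0 u0) z0 u0) s) (fb z0 u0),
          deriv (fun r => deriv (fun s => P s r z0 u0) (fb z0 u0)) (yb z0 u0),
          deriv (fun t => deriv (fun s => P s (yb z0 u0) t u0) (fb z0 u0)) z0;
        deriv (fun v => deriv (fun s => P s (yb z0 u0) z0 v) (fb z0 u0)) u0,
          deriv (fun v => deriv (fun r => P (fb z0 u0) r z0 v) (yb z0 u0)) u0,
          deriv (fun t => deriv (fun v => P (fb z0 u0) (yb z0 u0) t v) u0) z0]) :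
    deriv (fun t => deriv (fun v => P (fb t u0) (yb t u0) t v) u0) z0 =
      -Δ / (deriv (fun r => P (fb z0 u0) r z0 u0) (yb z0 u0) *
        deriv (fun s => deriv (fun t => P t (yb z0 u0) z0 u0) s) (fb z0 u0)) ∧
    (deriv (fun t => deriv (fun v => P (fb t u0) (yb t u0) t v) u0) z0 ≠ 0 ↔
      Δ ≠ 0) := by
  obtain ⟨δ, hδ, hδ2⟩ := heq
  set Q : E4 → ℝ := fun q => P q.1 q.2.1 q.2.2.1 q.2.2.2 with hQdef
  set p : E4 := (fb z0 u0, yb z0 u0, z0, u0) with hpdef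
  have hQd : DifferentiableAt ℝ Q p := hPa.differentiableAt
  set F' := fderiv ℝ (fderiv ℝ Q) p with hF'def
  have hsym : ∀ v w : E4, F' v w = F' w v :=
    (hPa.contDiffAt (n := 2)).isSymmSndFDerivAt (by simp)
  -- derivatives of fb, yb along z
  have hfb1 : DifferentiableAt ℝ (fun t => fb t u0) z0 := by
    have : AnalyticAt ℝ ((fun q : ℝ × ℝ => fb q.1 q.2) ∘ fun t => (t, u0)) z0 :=
      AnalyticAt.comp (f := fun t : ℝ => ((t, u0) : ℝ × ℝ)) (x := z0) hfa
        ((analyticAt_id).prod analyticAt_const)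
    exact this.differentiableAt
  have hyb1 : DifferentiableAt ℝ (fun t => yb t u0) z0 := by
    have : AnalyticAt ℝ ((fun q : ℝ × ℝ => yb q.1 q.2) ∘ fun t => (t, u0)) z0 :=
      AnalyticAt.comp (f := fun t : ℝ => ((t, u0) : ℝ × ℝ)) (x := z0) hya
        ((analyticAt_id).prod analyticAt_const)
    exact this.differentiableAt
  set fz := deriv (fun t => fb t u0) z0 with hfzdef
  set yz := deriv (fun t => yb t u0) z0 with hyzdef
  have hγ : HasDerivAt (fun t => ((fb t u0, yb t u0, t, u0) : E4)) (fz, yz, 1, 0) z0 :=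
    (hfb1.hasDerivAt).prodMk ((hyb1.hasDerivAt).prodMk
      ((hasDerivAt_id z0).prodMk (hasDerivAt_const z0 u0)))
  -- decomposition of the tangent vector
  have hvdec : ((fz, yz, 1, 0) : E4)
      = fz • ((1,0,0,0) : E4) + yz • ((0,1,0,0) : E4) + ((0,0,1,0) : E4) := by
    simp [Prod.ext_iff]
  -- first-order entries
  have hA : deriv (fun s => P s (yb z0 u0) z0 u0) (fb z0 u0) = fderiv ℝ Q p (1,0,0,0) :=
    pd_eq_aux Q hQd (l0_aux (yb z0 u0) z0 u0 (fb z0 u0)) rfl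
  have hB : deriv (fun r => P (fb z0 u0) r z0 u0) (yb z0 u0) = fderiv ℝ Q p (0,1,0,0) :=
    pd_eq_aux Q hQd (l1_aux (fb z0 u0) z0 u0 (yb z0 u0)) rfl
  have hC : deriv (fun t => P (fb z0 u0) (yb z0 u0) t u0) z0 = fderiv ℝ Q p (0,0,1,0) :=
    pd_eq_aux Q hQd (l2_aux (fb z0 u0) (yb z0 u0) u0 z0) rfl
  -- second-order entries
  have h10 : deriv (fun s => deriv (fun t => P t (yb z0 u0) z0 u0) s) (fb z0 u0)
      = F' (1,0,0,0) (1,0,0,0) :=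
    second_pd_aux Q hPa _ (l0_aux (yb z0 u0) z0 u0 (fb z0 u0)) rfl _
      (fun s hs => pd_eq_aux Q hs (l0_aux (yb z0 u0) z0 u0 s) rfl)
  have h11 : deriv (fun r => deriv (fun s => P s r z0 u0) (fb z0 u0)) (yb z0 u0)
      = F' (0,1,0,0) (1,0,0,0) :=
    second_pd_aux Q hPa _ (l1_aux (fb z0 u0) z0 u0 (yb z0 u0)) rfl _
      (fun r hr => pd_eq_aux Q hr (l0_aux r z0 u0 (fb z0 u0)) rfl)
  have h12 : deriv (fun t => deriv (fun s => P s (yb z0 u0) t u0) (fb z0 u0)) z0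
      = F' (0,0,1,0) (1,0,0,0) :=
    second_pd_aux Q hPa _ (l2_aux (fb z0 u0) (yb z0 u0) u0 z0) rfl _
      (fun t ht => pd_eq_aux Q ht (l0_aux (yb z0 u0) t u0 (fb z0 u0)) rfl)
  have h20 : deriv (fun v => deriv (fun s => P s (yb z0 u0) z0 v) (fb z0 u0)) u0
      = F' (0,0,0,1) (1,0,0,0) :=
    second_pd_aux Q hPa _ (l3_aux (fb z0 u0) (yb z0 u0) z0 u0) rfl _
      (fun v hv => pd_eq_aux Q hv (l0_aux (yb z0 u0) z0 v (fb z0 u0)) rfl)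
  have h21 : deriv (fun v => deriv (fun r => P (fb z0 u0) r z0 v) (yb z0 u0)) u0
      = F' (0,0,0,1) (0,1,0,0) :=
    second_pd_aux Q hPa _ (l3_aux (fb z0 u0) (yb z0 u0) z0 u0) rfl _
      (fun v hv => pd_eq_aux Q hv (l1_aux (fb z0 u0) z0 v (yb z0 u0)) rfl)
  have h22 : deriv (fun t => deriv (fun v => P (fb z0 u0) (yb z0 u0) t v) u0) z0
      = F' (0,0,1,0) (0,0,0,1) :=
    second_pd_aux Q hPa _ (l2_aux (fb z0 u0) (yb z0 u0) u0 z0) rfl _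
      (fun t ht => pd_eq_aux Q ht (l3_aux (fb z0 u0) (yb z0 u0) t u0) rfl)
  -- the target derivative
  have hLHS : deriv (fun t => deriv (fun v => P (fb t u0) (yb t u0) t v) u0) z0
      = F' (fz, yz, 1, 0) (0,0,0,1) :=
    second_pd_aux Q hPa _ hγ rfl _
      (fun t ht => pd_eq_aux Q ht (l3_aux (fb t u0) (yb t u0) t u0) rfl)
  -- vanishing identities from heq
  have hnear : ∀ᶠ t in 𝓝 z0, |t - z0| < δ := eventually_abs_sub_lt z0 hδ
  have hu0 : |u0 - u0| < δ := by simpa using hδ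
  have hA0 : fderiv ℝ Q p (1,0,0,0) = 0 := by
    rw [← hA]; exact (hδ2 z0 u0 (by simpa using hδ) hu0).2
  have hid1 : deriv (fun t => P (fb t u0) (yb t u0) t u0) z0 = 0 := by
    have hz : (fun t => P (fb t u0) (yb t u0) t u0) =ᶠ[𝓝 z0] fun _ => 0 :=
      hnear.mono fun t ht => (hδ2 t u0 ht hu0).1
    rw [hz.deriv_eq]; simp
  have hid1' : fderiv ℝ Q p (fz, yz, 1, 0) = 0 := by
    rw [← pd_eq_aux Q hQd hγ rfl]; exact hid1
  have hid2 : deriv (fun t => deriv (fun s => P s (yb t u0) t u0) (fb t u0)) z0 = 0 := by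
    have hz : (fun t => deriv (fun s => P s (yb t u0) t u0) (fb t u0)) =ᶠ[𝓝 z0]
        fun _ => 0 := hnear.mono fun t ht => (hδ2 t u0 ht hu0).2
    rw [hz.deriv_eq]; simp
  have hid2' : F' (fz, yz, 1, 0) (1,0,0,0) = 0 := by
    rw [← second_pd_aux Q hPa _ hγ rfl _
      (fun t ht => pd_eq_aux Q ht (l0_aux (yb t u0) t u0 (fb t u0)) rfl)]
    exact hid2
  -- linear expansions (before abbreviating)
  have hexp1 : fderiv ℝ Q p (fz, yz, 1, 0)
      = fz * fderiv ℝ Q p (1,0,0,0) + yz * fderiv ℝ Q p (0,1,0,0)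
        + fderiv ℝ Q p (0,0,1,0) := by
    rw [hvdec]
    simp only [map_add, map_smul, smul_eq_mul]
  have hexp2 : F' (fz, yz, 1, 0) (1,0,0,0)
      = fz * F' (1,0,0,0) (1,0,0,0) + yz * F' (0,1,0,0) (1,0,0,0)
        + F' (0,0,1,0) (1,0,0,0) := by
    rw [hvdec]
    simp only [map_add, map_smul, ContinuousLinearMap.add_apply,
      ContinuousLinearMap.smul_apply, smul_eq_mul]
  have hexp3 : F' (fz, yz, 1, 0) (0,0,0,1)
      = fz * F' (1,0,0,0) (0,0,0,1) + yz * F' (0,1,0,0) (0,0,0,1)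
        + F' (0,0,1,0) (0,0,0,1) := by
    rw [hvdec]
    simp only [map_add, map_smul, ContinuousLinearMap.add_apply,
      ContinuousLinearMap.smul_apply, smul_eq_mul]
  -- abbreviate the real quantities
  set A := fderiv ℝ Q p (1,0,0,0) with hAd
  set B := fderiv ℝ Q p (0,1,0,0) with hBd
  set C := fderiv ℝ Q p (0,0,1,0) with hCd
  set b := F' (1,0,0,0) (1,0,0,0) with hbd
  set m01 := F' (1,0,0,0) (0,1,0,0) with hm01d
  set m02 := F' (1,0,0,0) (0,0,1,0) with hm02d
  set K0 := F' (1,0,0,0) (0,0,0,1) with hK0d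
  set K1 := F' (0,1,0,0) (0,0,0,1) with hK1d
  set K2 := F' (0,0,1,0) (0,0,0,1) with hK2d
  -- equations
  have eq1 : yz * B + C = 0 := by
    have h := hid1'; rw [hexp1, hA0] at h; linarith
  have eq2 : fz * b + yz * m01 + m02 = 0 := by
    have h := hid2'
    rw [hexp2, hsym (0,1,0,0) (1,0,0,0), hsym (0,0,1,0) (1,0,0,0)] at h
    linarith
  -- nonvanishing
  have hBne : B ≠ 0 := by rwa [hB] at hPx1
  have hbne : b ≠ 0 := by rwa [h10] at hPx0x0
  -- compute Δ
  have hΔ' : Δ = A * m01 * K2 - A * m02 * K1 - B * b * K2 + B * m02 * K0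
      + C * b * K1 - C * m01 * K0 := by
    rw [hΔ, Matrix.det_fin_three]
    simp only [Fin.isValue, Matrix.of_apply, Matrix.cons_val', Matrix.cons_val_zero,
      Matrix.empty_val', Matrix.cons_val_fin_one, Matrix.cons_val_one, Matrix.head_cons,
      Matrix.cons_val_two, Nat.succ_eq_add_one, Nat.reduceAdd, Matrix.tail_cons,
      Matrix.head_fin_const]
    rw [hA, hB, hC, h10, h11, h12, h20, h21, h22]
    rw [hsym (0,1,0,0) (1,0,0,0), hsym (0,0,1,0) (1,0,0,0),
      hsym (0,0,0,1) (1,0,0,0), hsym (0,0,0,1) (0,1,0,0)]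
  have key : deriv (fun t => deriv (fun v => P (fb t u0) (yb t u0) t v) u0) z0
      = fz * K0 + yz * K1 + K2 := by
    rw [hLHS, hexp3]
  have keymul : (fz * K0 + yz * K1 + K2) * (B * b)
      = B * b * K2 - B * m02 * K0 - C * b * K1 + C * m01 * K0 := by
    linear_combination (B * K0) * eq2 + (b * K1 - m01 * K0) * eq1
  have hD : Δ = -((fz * K0 + yz * K1 + K2) * (B * b)) := by
    rw [hΔ', hA0]; linear_combination keymul
  constructor
  · rw [key, hB, h10, eq_div_iff (mul_ne_zero hBne hbne), hD]
    ring
  · rw [key, hD]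
    simp [hBne, hbne, mul_ne_zero_iff, not_or]
end
end

section
/- Let f ∈ ℝ[[z]] be the formal power series with coefficients [z^n] f = 2·(2n)!·3^n / ((n+2)!·n!) for all n ≥ 0 (the numbers of rooted planar maps with n edges). Then (54·z²·f + 1 − 18·z)² = (1 − 12·z)³ as formal power series; equivalently, f is the power series expansion of (18z − 1 + (1 − 12z)^{3/2})/(54z²). -/
noncomputable section

open PowerSeries

private lemma aux_zero_of_ode (h : ℝ⟦X⟧)
    (h0 : PowerSeries.coeff 0 h = 0)
    (hrec : (1 - 12 * X) * d⁄dX ℝ h + 36 * h = 0) : h = 0 := by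
  have c12 : (12 : ℝ⟦X⟧) = C 12 := (map_ofNat _ _).symm
  have c36 : (36 : ℝ⟦X⟧) = C 36 := (map_ofNat _ _).symm
  rw [c12, c36] at hrec
  ext n
  induction n with
  | zero => simpa using h0
  | succ n ih =>
    have ih' : coeff n h = 0 := by simpa using ih
    have hc := congrArg (coeff n) hrec
    rw [show (1 - C 12 * X) * d⁄dX ℝ h + C 36 * h
        = d⁄dX ℝ h + C 36 * h - X * (C 12 * d⁄dX ℝ h) by ring] at hc
    simp only [map_sub, map_add, coeff_C_mul, coeff_derivative, map_zero] at hc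
    cases n with
    | zero =>
      simp only [coeff_zero_eq_constantCoeff, map_mul, constantCoeff_X, zero_mul, ih',
        mul_zero, add_zero, sub_zero] at hc
      simpa using hc
    | succ m =>
      rw [coeff_succ_X_mul, coeff_C_mul, coeff_derivative, ih', mul_zero, add_zero] at hc
      simp only [zero_mul, mul_zero, sub_zero] at hc
      have : coeff (m + 1 + 1) h = 0 := by
        rcases mul_eq_zero.mp hc with h' | h'
        · exact h'
        · push_cast at h'
          exact absurd h' (by positivity)
      simpa using this

/-- The generating function `f(z) = Σ M_n zⁿ` of rooted planar maps, with
`M_n = 2·(2n)!·3ⁿ/((n+2)!·n!)`, satisfies `(54z²f + 1 - 18z)² = (1 - 12z)³`;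
equivalently, `f` is the power series expansion of
`(18z - 1 + (1-12z)^{3/2})/(54z²)`. -/
theorem planar_maps_generating_function
    (f : PowerSeries ℝ)
    (hf : ∀ n : ℕ, PowerSeries.coeff n f =
      2 * (Nat.factorial (2 * n) : ℝ) * 3 ^ n /
        ((Nat.factorial (n + 2) : ℝ) * (Nat.factorial n : ℝ))) :
    (54 * PowerSeries.X ^ 2 * f + 1 - 18 * PowerSeries.X) ^ 2 =
      (1 - 12 * PowerSeries.X) ^ 3 := by
  have c54 : (54 : ℝ⟦X⟧) = C 54 := (map_ofNat _ _).symm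
  have c18 : (18 : ℝ⟦X⟧) = C 18 := (map_ofNat _ _).symm
  have c12 : (12 : ℝ⟦X⟧) = C 12 := (map_ofNat _ _).symm
  set g : ℝ⟦X⟧ := 54 * X ^ 2 * f + 1 - 18 * X with hgdef
  have hg0 : coeff 0 g = 1 := by rw [hgdef]; simp
  have hg1 : coeff 1 g = -18 := by
    rw [hgdef, show (54:ℝ⟦X⟧) * X^2 * f + 1 - 18 * X
      = X * (X * (C 54 * f)) + 1 - X * C 18 by rw [c54, c18] at *; ring]
    simp [coeff_succ_X_mul]
  have hg2 : ∀ n : ℕ, coeff (n + 2) g = 54 * coeff n f := by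
    intro n
    rw [hgdef, show (54:ℝ⟦X⟧) * X^2 * f + 1 - 18 * X
      = X^2 * (C 54 * f) + 1 - C 18 * X by rw [c54, c18] at *; ring]
    simp [coeff_X_pow_mul, coeff_C_mul, coeff_one, coeff_X]
  -- the linear ODE for g
  have hA : (1 - 12 * X) * d⁄dX ℝ g = -18 * g := by
    have key : (1 - C 12 * X) * d⁄dX ℝ g + C 18 * g = 0 := by
      ext n
      rw [show (1 - C 12 * X) * d⁄dX ℝ g + C 18 * g
          = d⁄dX ℝ g + C 18 * g - X * (C 12 * d⁄dX ℝ g) by ring]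
      simp only [map_sub, map_add, coeff_C_mul, coeff_derivative, map_zero]
      match n with
      | 0 =>
        have hx0 : coeff 0 (X * (C 12 * d⁄dX ℝ g)) = 0 := by simp
        norm_num [hx0, hg0, hg1]
      | 1 =>
        rw [coeff_succ_X_mul, coeff_C_mul, coeff_derivative]
        rw [show ((1:ℕ) + 1 : ℕ) = 0 + 2 from rfl, hg2 0, hf 0, hg1]
        norm_num [Nat.factorial]
      | (m + 2) =>
        rw [coeff_succ_X_mul, coeff_C_mul, coeff_derivative]
        rw [show (m + 2 + 1 : ℕ) = (m + 1) + 2 by ring, hg2 (m+1), hg2 m,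
          show (m + 1 + 1 : ℕ) = m + 2 from rfl, hf (m+1), hf m]
        have e1 : (2 * (m + 1)).factorial = (2*m+2) * ((2*m+1) * (2*m).factorial) := by
          rw [show 2 * (m+1) = 2*m+1+1 by ring, Nat.factorial_succ, Nat.factorial_succ]
        have e2 : (m + 1 + 2).factorial = (m+3) * (m+2).factorial := by
          rw [show m+1+2 = (m+2)+1 by ring, Nat.factorial_succ]
        have e3 : (m + 1).factorial = (m+1) * m.factorial := Nat.factorial_succ m
        rw [e1, e2, e3]
        have f1 : ((m+2).factorial : ℝ) ≠ 0 := by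
          exact_mod_cast (m+2).factorial_ne_zero
        have f2 : ((m).factorial : ℝ) ≠ 0 := by exact_mod_cast m.factorial_ne_zero
        have f3 : ((m:ℝ) + 1) ≠ 0 := by positivity
        have f4 : ((m:ℝ) + 3) ≠ 0 := by positivity
        push_cast
        field_simp
        ring
    rw [c12, c18]
    linear_combination key
  -- derivative computations
  have hdu : d⁄dX ℝ (1 - 12 * X) = -12 := by
    rw [c12, map_sub, Derivation.leibniz]
    simp
  have hsq : d⁄dX ℝ (g ^ 2) = 2 * g * d⁄dX ℝ g := by
    rw [pow_two, Derivation.leibniz, smul_eq_mul]; ring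
  have hdQ : d⁄dX ℝ ((1 - 12 * X) ^ 3) = -36 * (1 - 12 * X) ^ 2 := by
    rw [Derivation.leibniz_pow, hdu]
    simp only [smul_eq_mul, nsmul_eq_mul]
    push_cast
    ring
  have h0 : coeff 0 (g ^ 2 - (1 - 12 * X) ^ 3) = 0 := by
    simp only [map_sub, coeff_zero_eq_constantCoeff, map_pow, map_sub, map_mul, map_one,
      constantCoeff_X]
    rw [coeff_zero_eq_constantCoeff] at hg0
    rw [hg0]
    norm_num
  have hode : (1 - 12 * X) * d⁄dX ℝ (g ^ 2 - (1 - 12 * X) ^ 3)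
      + 36 * (g ^ 2 - (1 - 12 * X) ^ 3) = 0 := by
    rw [map_sub, hsq, hdQ]
    linear_combination (2 * g) * hA
  have key := aux_zero_of_ode _ h0 hode
  have : g ^ 2 = (1 - 12 * X) ^ 3 := sub_eq_zero.mp key
  exact this
end
end

section
/- The sequence M_n = 2·(2n)!·3^n / ((n+2)!·n!) (the number of rooted planar maps with n edges) satisfies M_n ∼ (2/√π)·n^{−5/2}·12^n; that is, the ratio M_n / (n^{−5/2}·12^n) converges to 2/√π as n → ∞. -/
noncomputable section

open Filter Real Stirling

/-- The number `M_n = 2·(2n)!·3ⁿ/((n+2)!·n!)` of rooted planar maps with `n` edges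
satisfies `M_n ∼ (2/√π)·n^{-5/2}·12ⁿ`. -/
theorem planar_maps_asymptotics
    (M : ℕ → ℝ)
    (hM : ∀ n : ℕ, M n =
      2 * (Nat.factorial (2 * n) : ℝ) * 3 ^ n /
        ((Nat.factorial (n + 2) : ℝ) * (Nat.factorial n : ℝ))) :
    Filter.Tendsto
      (fun n : ℕ => M n / ((n : ℝ) ^ (-(5 : ℝ) / 2) * 12 ^ n))
      Filter.atTop (nhds (2 / Real.sqrt Real.pi)) := by
  have hπ : (0:ℝ) < Real.sqrt Real.pi := Real.sqrt_pos.mpr Real.pi_pos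
  have hlim : Tendsto
      (fun n : ℕ => 2 * (stirlingSeq (2 * n) / stirlingSeq n ^ 2) *
        ((n:ℝ) / (n + 1) * ((n:ℝ) / (n + 2))))
      atTop (nhds (2 / Real.sqrt Real.pi)) := by
    have h2n : Tendsto (fun n : ℕ => stirlingSeq (2 * n)) atTop (nhds (Real.sqrt Real.pi)) :=
      tendsto_stirlingSeq_sqrt_pi.comp (tendsto_atTop_atTop_of_monotone
        (fun a b h => Nat.mul_le_mul_left 2 h) (fun b => ⟨b, by omega⟩))
    have hn : Tendsto (fun n : ℕ => stirlingSeq n) atTop (nhds (Real.sqrt Real.pi)) :=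
      tendsto_stirlingSeq_sqrt_pi
    have hratio : Tendsto (fun n : ℕ => stirlingSeq (2 * n) / stirlingSeq n ^ 2) atTop
        (nhds (Real.sqrt Real.pi / (Real.sqrt Real.pi) ^ 2)) :=
      h2n.div (hn.pow 2) (by positivity)
    have h1 := tendsto_natCast_div_add_atTop (𝕜 := ℝ) 1
    have h2 := tendsto_natCast_div_add_atTop (𝕜 := ℝ) 2
    have := ((tendsto_const_nhds (x := (2:ℝ))).mul hratio).mul (h1.mul h2)
    convert this using 2
    rw [Real.sq_sqrt Real.pi_pos.le, mul_one]
    rw [show Real.sqrt Real.pi / Real.pi = 1 / Real.sqrt Real.pi by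
      rw [eq_div_iff hπ.ne', div_mul_eq_mul_div, Real.mul_self_sqrt Real.pi_pos.le,
        div_self Real.pi_pos.ne']]
    ring
  refine hlim.congr' ?_
  filter_upwards [eventually_ge_atTop 1] with n hn
  have hn0 : (0:ℝ) < (n:ℝ) := by exact_mod_cast hn
  have hs : Real.sqrt (2 * (n:ℝ)) > 0 := by positivity
  have hs2 : Real.sqrt (2 * ((2*n : ℕ):ℝ)) > 0 := by
    have : (0:ℝ) < ((2*n : ℕ):ℝ) := by positivity
    positivity
  -- factorials in terms of stirlingSeq
  have hfac : (Nat.factorial n : ℝ) =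
      stirlingSeq n * (Real.sqrt (2 * n) * ((n:ℝ) / Real.exp 1) ^ n) := by
    rw [stirlingSeq]
    field_simp
  have hfac2 : (Nat.factorial (2*n) : ℝ) =
      stirlingSeq (2*n) * (Real.sqrt (2 * ((2*n:ℕ):ℝ)) * (((2*n:ℕ):ℝ) / Real.exp 1) ^ (2*n)) := by
    rw [stirlingSeq]
    field_simp
  have hfacp : (Nat.factorial (n+2) : ℝ) = ((n:ℝ)+2) * ((n:ℝ)+1) * (Nat.factorial n : ℝ) := by
    push_cast [Nat.factorial_succ]
    ring
  have hkey : (n:ℝ)^2 * Real.sqrt (n:ℝ) = (n:ℝ) ^ ((5:ℝ)/2) := by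
    rw [Real.sqrt_eq_rpow, ← Real.rpow_natCast (n:ℝ) 2, ← Real.rpow_add hn0]
    norm_num
  have hrpow : (n:ℝ) ^ (-(5:ℝ)/2) = 1 / ((n:ℝ)^2 * Real.sqrt (n:ℝ)) := by
    rw [hkey, show (-(5:ℝ)/2) = -((5:ℝ)/2) by norm_num, Real.rpow_neg hn0.le, one_div]
  have hsqrt2 : Real.sqrt (2 * ((2*n:ℕ):ℝ)) = 2 * Real.sqrt (n:ℝ) := by
    push_cast
    rw [show (2:ℝ) * (2 * n) = (2:ℝ)^2 * n by ring, Real.sqrt_mul (by positivity),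
      Real.sqrt_sq (by norm_num)]
  have hssq : Real.sqrt (2*(n:ℝ)) ^ 2 = 2 * n := Real.sq_sqrt (by positivity)
  have hsn : Real.sqrt (n:ℝ) > 0 := Real.sqrt_pos.mpr hn0
  have hsn2 : Real.sqrt (n:ℝ) * Real.sqrt (n:ℝ) = (n:ℝ) := Real.mul_self_sqrt hn0.le
  have hstir_pos : 0 < stirlingSeq n := by
    rw [stirlingSeq]
    have h1 : (0:ℝ) < (Nat.factorial n : ℝ) := by exact_mod_cast Nat.factorial_pos n
    have h2 : (0:ℝ) < Real.sqrt (2*(n:ℝ)) * ((n:ℝ)/Real.exp 1)^n := by positivity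
    exact div_pos h1 h2
  have hstir2_pos : 0 < stirlingSeq (2*n) := by
    rw [stirlingSeq]
    have hn2 : (0:ℝ) < ((2*n:ℕ):ℝ) := by positivity
    have h1 : (0:ℝ) < (Nat.factorial (2*n) : ℝ) := by exact_mod_cast Nat.factorial_pos (2*n)
    have h2 : (0:ℝ) < Real.sqrt (2*((2*n:ℕ):ℝ)) * (((2*n:ℕ):ℝ)/Real.exp 1)^(2*n) := by positivity
    exact div_pos h1 h2
  have hexp : (0:ℝ) < Real.exp 1 := Real.exp_pos 1
  rw [hM n, hfacp, hfac, hfac2, hrpow, hsqrt2]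
  have hpow : (((2*n:ℕ):ℝ) / Real.exp 1) ^ (2*n) =
      4 ^ n * (((n:ℝ) / Real.exp 1) ^ n) ^ 2 := by
    push_cast
    have h4 : ((2:ℝ)*n/Real.exp 1)^2 = 4 * ((n:ℝ)/Real.exp 1)^2 := by
      field_simp; ring
    rw [pow_mul, h4, mul_pow, ← pow_mul, Nat.mul_comm 2 n, pow_mul]
  rw [hpow]
  have h12 : (12:ℝ) ^ n = 3 ^ n * 4 ^ n := by rw [← mul_pow]; norm_num
  rw [h12]
  have hpp : ((n:ℝ)/Real.exp 1) ^ n > 0 := by positivity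
  have hsq2 : Real.sqrt (2*(n:ℝ)) = Real.sqrt 2 * Real.sqrt (n:ℝ) := Real.sqrt_mul (by norm_num) _
  field_simp
  ring_nf
  rw [Real.sq_sqrt (show (0:ℝ) ≤ (n:ℝ) * 2 by positivity), Real.sq_sqrt hn0.le]
end
end

section
/- Let M(z,u) be the formal power series solution of the linear catalytic equation with Q0(z,u) = 1, Q1(z,u) = u + 1, Q2(z,u) = 1 (the equation for Motzkin paths: M(z,u) = 1 + z(u+1)M(z,u) + z·(M(z,u) − M(z,0))/u). Then M(z,0) satisfies the algebraic equation z²·M(z,0)² − (1 − z)·M(z,0) + 1 = 0 in ℝ[[z]], and its coefficients are the Motzkin numbers: [z^n] M(z,0) = Σ_{k=0}^{⌊n/2⌋} n! / ((n − 2k)!·k!·(k+1)!) for all n ≥ 0. -/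
noncomputable section

noncomputable def motzkinT (n k j : ℕ) : ℝ :=
  if k + 2*j ≤ n then
    (n.factorial * (k+1) : ℝ) / (j.factorial * (j+k+1).factorial * (n - k - 2*j).factorial)
  else 0

lemma core (n k j m : ℕ) (h : n + 1 = k + 2*j + m) :
    ((n+1).factorial * (k+1) : ℝ) / (j.factorial * (j+k+1).factorial * m.factorial) =
      (n.factorial * k : ℝ) / (j.factorial * (j+k).factorial * m.factorial) +
      (n.factorial * (k+1) * m : ℝ) / (j.factorial * (j+k+1).factorial * m.factorial) +
      (n.factorial * (k+2) * j : ℝ) / (j.factorial * (j+k+1).factorial * m.factorial) := by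
  have h1 : ((n+1).factorial : ℝ) = (n+1) * n.factorial := by
    rw [Nat.factorial_succ]; push_cast; ring
  have h2 : ((j+k+1).factorial : ℝ) = (j+k+1) * (j+k).factorial := by
    rw [Nat.factorial_succ]; push_cast; ring
  have hj : (j.factorial : ℝ) ≠ 0 := Nat.cast_ne_zero.mpr (Nat.factorial_ne_zero _)
  have hjk : ((j+k).factorial : ℝ) ≠ 0 := Nat.cast_ne_zero.mpr (Nat.factorial_ne_zero _)
  have hm : (m.factorial : ℝ) ≠ 0 := Nat.cast_ne_zero.mpr (Nat.factorial_ne_zero _)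
  have hjk1 : ((j:ℝ)+k+1) ≠ 0 := by positivity
  have hr : (n:ℝ) + 1 = k + 2*j + m := by exact_mod_cast h
  have hn : (n:ℝ) = k + 2*j + m - 1 := by linarith
  rw [h1, h2, hn]
  field_simp
  ring

lemma motzkinT_rec (n k j : ℕ) :
    motzkinT (n+1) k j =
      (if k = 0 then 0 else motzkinT n (k-1) j) + motzkinT n k j +
      (if j = 0 then 0 else motzkinT n (k+1) (j-1)) := by
  by_cases hc : k + 2*j ≤ n + 1
  · set m := n + 1 - k - 2*j with hmdef
    have hm : n + 1 = k + 2*j + m := by omega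
    have hkey := core n k j m hm
    have e1 : (if k = 0 then (0:ℝ) else motzkinT n (k-1) j)
        = (n.factorial * k : ℝ) / (j.factorial * (j+k).factorial * m.factorial) := by
      rcases k with _ | k'
      · simp
      · rw [if_neg (by omega)]
        unfold motzkinT
        rw [if_pos (by omega)]
        rw [show k' + 1 - 1 = k' from rfl]
        rw [show n - k' - 2*j = m by omega]
        rw [show j + k' + 1 = j + (k'+1) from rfl]
        push_cast; ring
    have e2 : motzkinT n k j
        = (n.factorial * (k+1) * m : ℝ) / (j.factorial * (j+k+1).factorial * m.factorial) := by
      unfold motzkinT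
      by_cases h2 : k + 2*j ≤ n
      · rw [if_pos h2]
        have hfac : (m.factorial : ℝ) = m * (n-k-2*j).factorial := by
          rw [show m = (n - k - 2*j) + 1 by omega, Nat.factorial_succ]
          push_cast
          ring
        rw [hfac]
        have hj : (j.factorial : ℝ) ≠ 0 := Nat.cast_ne_zero.mpr (Nat.factorial_ne_zero _)
        have hjk : ((j+k+1).factorial : ℝ) ≠ 0 := Nat.cast_ne_zero.mpr (Nat.factorial_ne_zero _)
        have hnk : ((n-k-2*j).factorial : ℝ) ≠ 0 := Nat.cast_ne_zero.mpr (Nat.factorial_ne_zero _)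
        have hmne : ((m:ℝ)) ≠ 0 := Nat.cast_ne_zero.mpr (by omega)
        field_simp
      · rw [if_neg h2]
        have : m = 0 := by omega
        simp [this]
    have e3 : (if j = 0 then (0:ℝ) else motzkinT n (k+1) (j-1))
        = (n.factorial * (k+2) * j : ℝ) / (j.factorial * (j+k+1).factorial * m.factorial) := by
      rcases j with _ | j'
      · simp
      · rw [if_neg (by omega)]
        unfold motzkinT
        rw [if_pos (by omega)]
        rw [show j' + 1 - 1 = j' from rfl]
        rw [show n - (k+1) - 2*j' = m by omega]
        rw [show j' + (k+1) + 1 = (j'+1) + k + 1 by omega]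
        rw [show ((j'+1).factorial : ℝ) = (j'+1) * j'.factorial by
          rw [Nat.factorial_succ]; push_cast; ring]
        have hj : (j'.factorial : ℝ) ≠ 0 := Nat.cast_ne_zero.mpr (Nat.factorial_ne_zero _)
        have hjk : (((j'+1) + k + 1).factorial : ℝ) ≠ 0 := Nat.cast_ne_zero.mpr (Nat.factorial_ne_zero _)
        have hmf : (m.factorial : ℝ) ≠ 0 := Nat.cast_ne_zero.mpr (Nat.factorial_ne_zero _)
        have hj1 : ((j':ℝ)+1) ≠ 0 := by positivity
        field_simp
        push_cast; ring
    rw [e1, e2, e3, ← hkey]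
    unfold motzkinT
    rw [if_pos hc, show n + 1 - k - 2*j = m from rfl]
  · unfold motzkinT
    rw [if_neg hc]
    split_ifs <;> first | (exfalso; omega) | ring1

noncomputable def motzkinA (n k : ℕ) : ℝ := ∑ j ∈ Finset.range (n+1), motzkinT n k j

lemma motzkinT_zero_of_gt {n k j : ℕ} (h : n < k + 2*j) : motzkinT n k j = 0 := by
  unfold motzkinT; rw [if_neg (by omega)]

lemma motzkinA_zero (k : ℕ) : motzkinA 0 k = if k = 0 then 1 else 0 := by
  unfold motzkinA motzkinT
  rcases k with _ | k' <;> simp [Nat.factorial]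

lemma motzkinA_rec (n k : ℕ) :
    motzkinA (n+1) k = (if k = 0 then 0 else motzkinA n (k-1)) + motzkinA n k + motzkinA n (k+1) := by
  unfold motzkinA
  simp only [motzkinT_rec n k]
  rw [Finset.sum_add_distrib, Finset.sum_add_distrib]
  congr 1
  · congr 1
    · -- ∑_{j<n+2} (if k=0 then 0 else T n (k-1) j) = if k=0 then 0 else ∑_{j<n+1}
      rcases k with _ | k'
      · simp
      · simp only [Nat.succ_ne_zero, if_false]
        rw [Finset.sum_range_succ, motzkinT_zero_of_gt (by omega), add_zero]
    · rw [Finset.sum_range_succ, motzkinT_zero_of_gt (by omega), add_zero]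
  · rw [Finset.sum_range_succ']
    simp only [Nat.succ_ne_zero, if_false, if_pos rfl, Nat.add_sub_cancel, if_true, add_zero]


open PowerSeries

lemma coeff_X_mul' (f : PowerSeries ℝ) (i : ℕ) :
    PowerSeries.coeff (R := ℝ) i (PowerSeries.X * f) = if 1 ≤ i then PowerSeries.coeff (R := ℝ) (i-1) f else 0 := by
  rw [show (PowerSeries.X : PowerSeries ℝ) * f = PowerSeries.X^1 * f by rw [pow_one],
    PowerSeries.coeff_X_pow_mul']

section abstractSeq

variable (a : ℕ → ℕ → ℝ)
  (h0 : ∀ k, a 0 k = if k = 0 then 1 else 0)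
  (hrec : ∀ n k, a (n+1) k = (if k = 0 then 0 else a n (k-1)) + a n k + a n (k+1))

local notation "F" => PowerSeries.mk (fun n => a n 0)

include h0 hrec in
lemma seq_invariant : ∀ n k, a n k =
    if k ≤ n then PowerSeries.coeff (R := ℝ) (n-k) ((F)^(k+1)) else 0 := by
  intro n
  induction n using Nat.strong_induction_on with
  | _ n IH =>
    rcases n with _ | n
    · intro k
      rcases k with _ | k'
      · simp [h0]
      · rw [h0, if_neg (Nat.succ_ne_zero _), if_neg (by omega)]
    · -- hG : low coefficients of F - (1 + X F + X^2 F^2) vanish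
      have hG : ∀ i, i ≤ n + 1 →
          PowerSeries.coeff (R := ℝ) i ((F) - (1 + PowerSeries.X * (F) + PowerSeries.X^2 * (F)^2)) = 0 := by
        intro i hi
        rw [map_sub, map_add, map_add]
        rcases i with _ | i'
        · simp [h0]
        · rw [PowerSeries.coeff_mk, PowerSeries.coeff_one, if_neg (Nat.succ_ne_zero _),
            PowerSeries.coeff_succ_X_mul, PowerSeries.coeff_mk, PowerSeries.coeff_X_pow_mul',
            hrec, if_pos rfl]
          rcases i' with _ | i''
          · simp [h0]
          · rw [if_pos (by omega)]
            have := IH (i''+1) (by omega) 1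
            rw [if_pos (by omega)] at this
            rw [this]
            have : i'' + 1 + 1 - 2 = i'' + 1 - 1 := by omega
            rw [this]
            ring
      intro k
      rcases k with _ | k'
      · rw [if_pos (by omega), hrec, if_pos rfl, pow_one, PowerSeries.coeff_mk,
          Nat.sub_zero, hrec, if_pos rfl]
      · by_cases hk : k' + 1 ≤ n + 1
        · rw [if_pos hk]
          have hdecomp : (F)^(k'+2) =
              (F)^(k'+1) * ((F) - (1 + PowerSeries.X * (F) + PowerSeries.X^2 * (F)^2))
              + (F)^(k'+1) + PowerSeries.X * (F)^(k'+2) + PowerSeries.X^2 * (F)^(k'+3) := by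
            ring
          have hz : PowerSeries.coeff (R := ℝ) (n+1-(k'+1))
              ((F)^(k'+1) * ((F) - (1 + PowerSeries.X * (F) + PowerSeries.X^2 * (F)^2))) = 0 := by
            rw [PowerSeries.coeff_mul]
            apply Finset.sum_eq_zero
            rintro ⟨p, q⟩ hpq
            rw [Finset.HasAntidiagonal.mem_antidiagonal] at hpq
            rw [hG q (by omega), mul_zero]
          rw [show k' + 1 + 1 = k' + 2 from rfl, hdecomp]
          rw [map_add, map_add, map_add, hz, zero_add]
          rw [hrec, if_neg (Nat.succ_ne_zero _), show k'+1-1 = k' from rfl]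
          rw [IH n (by omega) k', IH n (by omega) (k'+1), IH n (by omega) (k'+2)]
          rw [if_pos (by omega)]
          rw [coeff_X_mul', PowerSeries.coeff_X_pow_mul']
          rw [show n + 1 - (k'+1) = n - k' from by omega]
          rw [show k'+1+1 = k'+2 from rfl, show k'+2+1 = k'+3 from rfl]
          congr 1
          · congr 1
            · by_cases h1 : k' + 1 ≤ n
              · rw [if_pos h1, if_pos (show 1 ≤ n - k' from by omega),
                  show n - (k'+1) = n - k' - 1 from by omega]
              · rw [if_neg h1, if_neg (show ¬ 1 ≤ n - k' from by omega)]
          · by_cases h2 : k' + 2 ≤ n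
            · rw [if_pos h2, if_pos (show 2 ≤ n - k' from by omega),
                show n - (k'+2) = n - k' - 2 from by omega]
            · rw [if_neg h2, if_neg (show ¬ 2 ≤ n - k' from by omega)]
        · rw [if_neg hk, hrec, if_neg (Nat.succ_ne_zero _), show k'+1-1 = k' from rfl]
          rw [IH n (by omega) k', IH n (by omega) (k'+1), IH n (by omega) (k'+2)]
          rw [if_neg (by omega), if_neg (by omega), if_neg (by omega)]
          ring

include h0 hrec in
lemma seq_quad : (F) = 1 + PowerSeries.X * (F) + PowerSeries.X^2 * (F)^2 := by
  have INV := seq_invariant a h0 hrec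
  rw [← sub_eq_zero]
  ext i
  rw [map_sub, map_add, map_add, map_zero]
  rcases i with _ | i'
  · simp [h0]
  · rw [PowerSeries.coeff_mk, PowerSeries.coeff_one, if_neg (Nat.succ_ne_zero _),
      PowerSeries.coeff_succ_X_mul, PowerSeries.coeff_mk, PowerSeries.coeff_X_pow_mul',
      hrec, if_pos rfl]
    rcases i' with _ | i''
    · simp [h0]
    · rw [if_pos (by omega)]
      have := INV (i''+1) 1
      rw [if_pos (by omega)] at this
      rw [this, show i'' + 1 + 1 - 2 = i'' + 1 - 1 from by omega]
      ring

end abstractSeq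

section theSeq

variable (a : ℕ → ℕ → ℝ)
  (h0 : ∀ k, a 0 k = if k = 0 then 1 else 0)
  (hrec : ∀ n k, a (n+1) k = (if k = 0 then 0 else a n (k-1)) + a n k + a n (k+1))

include h0 hrec in
lemma seq_eq_A : ∀ n k, a n k = motzkinA n k := by
  intro n
  induction n with
  | zero => intro k; rw [h0, motzkinA_zero]
  | succ n ih =>
    intro k
    rw [hrec n k, motzkinA_rec n k]
    rcases k with _ | k' <;> simp [ih]

end theSeq

/-- **Motzkin paths.**  The solution `M(z,u)` of the linear catalytic equation
`M(z,u) = 1 + z(u+1)M(z,u) + z(M(z,u)-M(z,0))/u` (the case `Q0 = 1`, `Q1 = u+1`,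
`Q2 = 1`) has `M(z,0)` satisfying `z²M(z,0)² - (1-z)M(z,0) + 1 = 0`, and its
coefficients are the Motzkin numbers
`[zⁿ]M(z,0) = Σ_{k=0}^{⌊n/2⌋} n!/((n-2k)!·k!·(k+1)!)`. -/
theorem motzkin_catalytic
    (M : PowerSeries (PowerSeries ℝ))
    (hM : M = 1 + PowerSeries.X * M *
        (PowerSeries.C (R := PowerSeries ℝ) PowerSeries.X + 1) +
      PowerSeries.X * divDiff M) :
    PowerSeries.X ^ 2 * atU0 M ^ 2 - (1 - PowerSeries.X) * atU0 M + 1 = 0 ∧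
    ∀ n : ℕ, PowerSeries.coeff (R := ℝ) n (atU0 M) =
      ∑ k ∈ Finset.range (n / 2 + 1),
        (Nat.factorial n : ℝ) /
          ((Nat.factorial (n - 2 * k) : ℝ) * (Nat.factorial k : ℝ) *
            (Nat.factorial (k + 1) : ℝ)) := by
  classical
  set a : ℕ → ℕ → ℝ := fun n k => PowerSeries.coeff (R := ℝ) k (PowerSeries.coeff (R := PowerSeries ℝ) n M)
    with ha
  have hM0 : PowerSeries.coeff (R := PowerSeries ℝ) 0 M = 1 := by
    conv_lhs => rw [hM]
    simp [PowerSeries.coeff_zero_eq_constantCoeff]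
  have hMrec : ∀ n, PowerSeries.coeff (R := PowerSeries ℝ) (n+1) M =
      (PowerSeries.coeff (R := PowerSeries ℝ) n M) * PowerSeries.X
      + PowerSeries.coeff (R := PowerSeries ℝ) n M
      + divU (PowerSeries.coeff (R := PowerSeries ℝ) n M) := by
    intro n
    conv_lhs => rw [hM]
    rw [map_add, map_add, mul_assoc, PowerSeries.coeff_succ_X_mul,
      PowerSeries.coeff_succ_X_mul, mul_add, mul_one, map_add, PowerSeries.coeff_mul_C]
    simp only [divDiff, PowerSeries.coeff_mk]
    rw [PowerSeries.coeff_one, if_neg (Nat.succ_ne_zero n)]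
    ring
  have h0 : ∀ k, a 0 k = if k = 0 then 1 else 0 := by
    intro k
    rw [ha]
    simp only [hM0]
    rw [PowerSeries.coeff_one]
  have hrec : ∀ n k, a (n+1) k = (if k = 0 then 0 else a n (k-1)) + a n k + a n (k+1) := by
    intro n k
    rw [ha]
    simp only [hMrec n, map_add]
    have hdiv : PowerSeries.coeff (R := ℝ) k (divU (PowerSeries.coeff (R := PowerSeries ℝ) n M)) =
        PowerSeries.coeff (R := ℝ) (k+1) (PowerSeries.coeff (R := PowerSeries ℝ) n M) := by
      simp only [divU, PowerSeries.coeff_mk]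
    rw [hdiv]
    rcases k with _ | k'
    · rw [PowerSeries.coeff_zero_mul_X, if_pos rfl]
    · rw [PowerSeries.coeff_succ_mul_X, if_neg (Nat.succ_ne_zero _)]
      rfl
  have hat : atU0 M = PowerSeries.mk (fun n => a n 0) := by
    ext n
    unfold atU0
    rw [PowerSeries.coeff_map, PowerSeries.coeff_mk, ha,
      ← PowerSeries.coeff_zero_eq_constantCoeff_apply]
  constructor
  · have hq := seq_quad a h0 hrec
    rw [hat]
    linear_combination -hq
  · intro n
    rw [hat, PowerSeries.coeff_mk]
    have hA := seq_eq_A a h0 hrec n 0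
    rw [hA]
    unfold motzkinA
    rw [← Finset.sum_subset (Finset.range_subset_range.mpr (by omega : n/2+1 ≤ n+1))
      (fun j _ hj => motzkinT_zero_of_gt
        (by simp only [Finset.mem_range, not_lt] at hj; omega))]
    apply Finset.sum_congr rfl
    intro j hj
    rw [Finset.mem_range] at hj
    unfold motzkinT
    rw [if_pos (by omega)]
    norm_num
    ring
end
end

section
/- Let D(z,x) = 768x⁴z⁴ − 1536x³z⁴ − 512x³z³ + 2304x²z⁴ + 768x²z³ − 1536xz⁴ + 96x²z² + 768xz³ + 768z⁴ − 96xz² − 512z³ + 96z² − 1. Suppose ρ is a real-analytic function on a neighborhood of x = 1 with ρ(1) = 1/12 and D(ρ(x), x) = 0 identically near x = 1. Then ρ'(1) = −1/24 and ρ''(1) = 19/384; consequently μ := −ρ'(1)/ρ(1) = 1/2 and σ² := μ + μ² − ρ''(1)/ρ(1) = 5/32. -/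
noncomputable section

/-- The discriminant polynomial whose root `z = ρ(x)` is the singularity of the
generating function `M(z,x,1)` of rooted planar maps counted by edges `z` and
vertices `x`. -/
def Dpoly (z x : ℝ) : ℝ :=
  768 * x ^ 4 * z ^ 4 - 1536 * x ^ 3 * z ^ 4 - 512 * x ^ 3 * z ^ 3 +
    2304 * x ^ 2 * z ^ 4 + 768 * x ^ 2 * z ^ 3 - 1536 * x * z ^ 4 +
    96 * x ^ 2 * z ^ 2 + 768 * x * z ^ 3 + 768 * z ^ 4 - 96 * x * z ^ 2 -
    512 * z ^ 3 + 96 * z ^ 2 - 1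

/-- ∂D/∂z -/
def DZp (z x : ℝ) : ℝ :=
  (3072) * x ^ 4 * z ^ 3 + (-6144) * x ^ 3 * z ^ 3 + (-1536) * x ^ 3 * z ^ 2 +
    (9216) * x ^ 2 * z ^ 3 + (2304) * x ^ 2 * z ^ 2 + (192) * x ^ 2 * z ^ 1 +
    (-6144) * x ^ 1 * z ^ 3 + (2304) * x ^ 1 * z ^ 2 + (-192) * x ^ 1 * z ^ 1 +
    (3072) * x ^ 0 * z ^ 3 + (-1536) * x ^ 0 * z ^ 2 + (192) * x ^ 0 * z ^ 1

/-- ∂D/∂x -/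
def DXp (z x : ℝ) : ℝ :=
  (3072) * x ^ 3 * z ^ 4 + (-4608) * x ^ 2 * z ^ 4 + (-1536) * x ^ 2 * z ^ 3 +
    (4608) * x ^ 1 * z ^ 4 + (1536) * x ^ 1 * z ^ 3 + (192) * x ^ 1 * z ^ 2 +
    (-1536) * x ^ 0 * z ^ 4 + (768) * x ^ 0 * z ^ 3 + (-96) * x ^ 0 * z ^ 2

/-- ∂²D/∂z² -/
def DZZp (z x : ℝ) : ℝ :=
  (9216) * x ^ 4 * z ^ 2 + (-18432) * x ^ 3 * z ^ 2 + (-3072) * x ^ 3 * z ^ 1 +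
    (27648) * x ^ 2 * z ^ 2 + (4608) * x ^ 2 * z ^ 1 + (192) * x ^ 2 * z ^ 0 +
    (-18432) * x ^ 1 * z ^ 2 + (4608) * x ^ 1 * z ^ 1 + (-192) * x ^ 1 * z ^ 0 +
    (9216) * x ^ 0 * z ^ 2 + (-3072) * x ^ 0 * z ^ 1 + (192) * x ^ 0 * z ^ 0

/-- ∂²D/∂z∂x -/
def DZXp (z x : ℝ) : ℝ :=
  (12288) * x ^ 3 * z ^ 3 + (-18432) * x ^ 2 * z ^ 3 + (-4608) * x ^ 2 * z ^ 2 +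
    (18432) * x ^ 1 * z ^ 3 + (4608) * x ^ 1 * z ^ 2 + (384) * x ^ 1 * z ^ 1 +
    (-6144) * x ^ 0 * z ^ 3 + (2304) * x ^ 0 * z ^ 2 + (-192) * x ^ 0 * z ^ 1

/-- ∂²D/∂x² -/
def DXXp (z x : ℝ) : ℝ :=
  (9216) * x ^ 2 * z ^ 4 + (-9216) * x ^ 1 * z ^ 4 + (-3072) * x ^ 1 * z ^ 3 +
    (4608) * x ^ 0 * z ^ 4 + (1536) * x ^ 0 * z ^ 3 + (192) * x ^ 0 * z ^ 2

section aux

variable {f : ℝ → ℝ} {u x : ℝ}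

private lemma Tlem (hf : HasDerivAt f u x) (c : ℝ) (i j : ℕ) :
    HasDerivAt (fun y => c * y ^ i * f y ^ j)
      ((c * (↑i * x ^ (i - 1))) * f x ^ j + (c * x ^ i) * (↑j * f x ^ (j - 1) * u)) x :=
  ((hasDerivAt_pow i x).const_mul c).mul (hf.pow j)

lemma hasDerivAt_Dpoly_comp (hf : HasDerivAt f u x) :
    HasDerivAt (fun y => Dpoly (f y) y) (DZp (f x) x * u + DXp (f x) x) x := by
  have T := Tlem hf
  have hfun : (fun y => Dpoly (f y) y) = fun y =>
      (768:ℝ) * y ^ 4 * f y ^ 4 + (-1536) * y ^ 3 * f y ^ 4 + (-512) * y ^ 3 * f y ^ 3 +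
      (2304) * y ^ 2 * f y ^ 4 + (768) * y ^ 2 * f y ^ 3 + (96) * y ^ 2 * f y ^ 2 +
      (-1536) * y ^ 1 * f y ^ 4 + (768) * y ^ 1 * f y ^ 3 + (-96) * y ^ 1 * f y ^ 2 +
      (768) * y ^ 0 * f y ^ 4 + (-512) * y ^ 0 * f y ^ 3 + (96) * y ^ 0 * f y ^ 2 +
      (-1) * y ^ 0 * f y ^ 0 := by
    funext y; simp only [Dpoly]; ring
  rw [hfun]
  have H := (((((((((((((T (768) 4 4).add (T (-1536) 3 4)).add (T (-512) 3 3)).add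
    (T (2304) 2 4)).add (T (768) 2 3)).add (T (96) 2 2)).add (T (-1536) 1 4)).add
    (T (768) 1 3)).add (T (-96) 1 2)).add (T (768) 0 4)).add (T (-512) 0 3)).add
    (T (96) 0 2)).add (T (-1) 0 0))
  refine H.congr_deriv ?_
  simp only [DZp, DXp]
  push_cast
  norm_num
  try ring

lemma hasDerivAt_DZp_comp (hf : HasDerivAt f u x) :
    HasDerivAt (fun y => DZp (f y) y) (DZZp (f x) x * u + DZXp (f x) x) x := by
  have T := Tlem hf
  have hfun : (fun y => DZp (f y) y) = fun y =>
      (3072:ℝ) * y ^ 4 * f y ^ 3 + (-6144) * y ^ 3 * f y ^ 3 + (-1536) * y ^ 3 * f y ^ 2 +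
      (9216) * y ^ 2 * f y ^ 3 + (2304) * y ^ 2 * f y ^ 2 + (192) * y ^ 2 * f y ^ 1 +
      (-6144) * y ^ 1 * f y ^ 3 + (2304) * y ^ 1 * f y ^ 2 + (-192) * y ^ 1 * f y ^ 1 +
      (3072) * y ^ 0 * f y ^ 3 + (-1536) * y ^ 0 * f y ^ 2 + (192) * y ^ 0 * f y ^ 1 := by
    funext y; simp only [DZp]
  rw [hfun]
  have H := ((((((((((((T (3072) 4 3).add (T (-6144) 3 3)).add (T (-1536) 3 2)).add
    (T (9216) 2 3)).add (T (2304) 2 2)).add (T (192) 2 1)).add (T (-6144) 1 3)).add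
    (T (2304) 1 2)).add (T (-192) 1 1)).add (T (3072) 0 3)).add (T (-1536) 0 2)).add
    (T (192) 0 1))
  refine H.congr_deriv ?_
  simp only [DZZp, DZXp]
  push_cast
  norm_num
  try ring

lemma hasDerivAt_DXp_comp (hf : HasDerivAt f u x) :
    HasDerivAt (fun y => DXp (f y) y) (DZXp (f x) x * u + DXXp (f x) x) x := by
  have T := Tlem hf
  have hfun : (fun y => DXp (f y) y) = fun y =>
      (3072:ℝ) * y ^ 3 * f y ^ 4 + (-4608) * y ^ 2 * f y ^ 4 + (-1536) * y ^ 2 * f y ^ 3 +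
      (4608) * y ^ 1 * f y ^ 4 + (1536) * y ^ 1 * f y ^ 3 + (192) * y ^ 1 * f y ^ 2 +
      (-1536) * y ^ 0 * f y ^ 4 + (768) * y ^ 0 * f y ^ 3 + (-96) * y ^ 0 * f y ^ 2 := by
    funext y; simp only [DXp]
  rw [hfun]
  have H := (((((((((T (3072) 3 4).add (T (-4608) 2 4)).add (T (-1536) 2 3)).add
    (T (4608) 1 4)).add (T (1536) 1 3)).add (T (192) 1 2)).add (T (-1536) 0 4)).add
    (T (768) 0 3)).add (T (-96) 0 2))
  refine H.congr_deriv ?_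
  simp only [DZXp, DXXp]
  push_cast
  norm_num
  try ring

end aux

/-- If `ρ` is real-analytic near `x = 1` with `ρ(1) = 1/12` and `D(ρ(x),x) = 0`
identically near `1`, then `ρ'(1) = -1/24`, `ρ''(1) = 19/384`, hence
`μ = -ρ'(1)/ρ(1) = 1/2` and `σ² = μ + μ² - ρ''(1)/ρ(1) = 5/32`. -/
theorem planar_map_vertex_singularity_derivatives
    (ρ : ℝ → ℝ)
    (hρa : ∃ δ : ℝ, 0 < δ ∧ ∀ x : ℝ, |x - 1| < δ → AnalyticAt ℝ ρ x)
    (hρ1 : ρ 1 = 1 / 12)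
    (hD : ∃ δ : ℝ, 0 < δ ∧ ∀ x : ℝ, |x - 1| < δ → Dpoly (ρ x) x = 0) :
    deriv ρ 1 = -(1 / 24) ∧
    iteratedDeriv 2 ρ 1 = 19 / 384 ∧
    -(deriv ρ 1) / ρ 1 = 1 / 2 ∧
    -(deriv ρ 1) / ρ 1 + (-(deriv ρ 1) / ρ 1) ^ 2 -
      iteratedDeriv 2 ρ 1 / ρ 1 = 5 / 32 := by
  obtain ⟨δ₁, hδ₁, h₁⟩ := hρa
  obtain ⟨δ₂, hδ₂, h₂⟩ := hD
  have hA : ∀ᶠ y in nhds (1:ℝ), AnalyticAt ℝ ρ y :=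
    (eventually_abs_sub_lt (1:ℝ) hδ₁).mono h₁
  have hEq : (fun y => Dpoly (ρ y) y) =ᶠ[nhds (1:ℝ)] fun _ => 0 :=
    (eventually_abs_sub_lt (1:ℝ) hδ₂).mono h₂
  set g : ℝ → ℝ := fun y => DZp (ρ y) y * deriv ρ y + DXp (ρ y) y with hg_def
  -- the derivative of `Dpoly (ρ ·) ·` is `g` near 1
  have hDf : deriv (fun y => Dpoly (ρ y) y) =ᶠ[nhds (1:ℝ)] g :=
    hA.mono fun y hy =>
      (hasDerivAt_Dpoly_comp hy.differentiableAt.hasDerivAt).deriv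
  have hzero : deriv (fun _ : ℝ => (0:ℝ)) = fun _ => (0:ℝ) := by
    funext y; simp
  have hg0 : g =ᶠ[nhds (1:ℝ)] fun _ => (0:ℝ) := by
    have := hEq.deriv
    rw [hzero] at this
    exact hDf.symm.trans this
  have eq1 : DZp (ρ 1) 1 * deriv ρ 1 + DXp (ρ 1) 1 = 0 := hg0.eq_of_nhds
  -- analyticity of `deriv ρ` at 1
  have hA1 : AnalyticAt ℝ ρ 1 := hA.self_of_nhds
  have hdA : AnalyticAt ℝ (deriv ρ) 1 := by
    have hOn : AnalyticOnNhd ℝ ρ {(1:ℝ)} := fun y hy => by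
      rw [Set.mem_singleton_iff] at hy; rw [hy]; exact hA1
    exact hOn.deriv 1 rfl
  have hu : HasDerivAt ρ (deriv ρ 1) 1 := hA1.differentiableAt.hasDerivAt
  have hv : HasDerivAt (deriv ρ) (deriv (deriv ρ) 1) 1 :=
    hdA.differentiableAt.hasDerivAt
  have hgE : HasDerivAt g
      ((DZZp (ρ 1) 1 * deriv ρ 1 + DZXp (ρ 1) 1) * deriv ρ 1 +
        DZp (ρ 1) 1 * deriv (deriv ρ) 1 +
        (DZXp (ρ 1) 1 * deriv ρ 1 + DXXp (ρ 1) 1)) 1 :=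
    ((hasDerivAt_DZp_comp hu).mul hv).add (hasDerivAt_DXp_comp hu)
  have eq2 : (DZZp (ρ 1) 1 * deriv ρ 1 + DZXp (ρ 1) 1) * deriv ρ 1 +
      DZp (ρ 1) 1 * deriv (deriv ρ) 1 +
      (DZXp (ρ 1) 1 * deriv ρ 1 + DXXp (ρ 1) 1) = 0 := by
    have h1 := hgE.deriv
    have h2 := hg0.deriv
    rw [hzero] at h2
    have h3 : deriv g 1 = 0 := h2.self_of_nhds
    rw [h1] at h3
    exact h3
  -- solve the linear equations
  rw [hρ1] at eq1 eq2
  simp only [DZp, DXp, DZZp, DZXp, DXXp] at eq1 eq2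
  norm_num at eq1 eq2
  have hr1 : deriv ρ 1 = -(1/24) := by linarith
  rw [hr1] at eq2
  have hr2 : deriv (deriv ρ) 1 = 19/384 := by linarith
  have hiter : iteratedDeriv 2 ρ 1 = deriv (deriv ρ) 1 := by
    rw [show (2:ℕ) = 1 + 1 from rfl, iteratedDeriv_succ, iteratedDeriv_one]
  refine ⟨hr1, by rw [hiter]; exact hr2, by rw [hr1, hρ1]; norm_num, ?_⟩
  rw [hiter, hr2, hr1, hρ1]; norm_num
end
end
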